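/- Let a be a positive rational number, b a rational number, and let R be an irreducible polynomial of ℚ[T]. Then the polynomial R(aT+b) is also irreducible in ℚ[T]. Moreover, R(aT+b) is an associate of R (i.e., a nonzero rational multiple of R) if and only if either a ≠ 1 and R is a rational multiple of (a−1)T + b, or (a,b) = (1,0). -/

import Mathlib

open Polynomial

lemma aux_coeff_comp_C_mul_X (p : Polynomial ℚ) (a : ℚ) (i : ℕ) :
    (p.comp (C a * X)).coeff i = p.coeff i * a ^ i := by
  induction p using Polynomial.induction_on' with
  | add p q hp hq => simp [add_comp, hp, hq, add_mul]
  | monomial n r =>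
    have h1 : (monomial n r).comp (C a * X) = C (r * a ^ n) * X ^ n := by
      simp only [Polynomial.comp, eval₂_monomial, mul_pow, ← C_pow, ← C_mul]
      rw [← mul_assoc, ← C_mul]
    rw [h1, coeff_C_mul, coeff_X_pow, coeff_monomial]
    rcases eq_or_ne i n with rfl | h
    · simp
    · simp [h, Ne.symm h]

lemma aux_pow_inj (a : ℚ) (ha : 0 < a) (ha1 : a ≠ 1) {i j : ℕ} (h : a ^ i = a ^ j) : i = j := by
  rcases lt_trichotomy a 1 with hlt | heq | hgt
  · exact (pow_right_strictAnti₀ ha hlt).injective h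
  · exact absurd heq ha1
  · exact (pow_right_strictMono₀ hgt).injective h

theorem stmt_3 (a b : ℚ) (ha : 0 < a) (R : Polynomial ℚ) (hR : Irreducible R) :
    Irreducible (R.comp (Polynomial.C a * Polynomial.X + Polynomial.C b)) ∧
    ((∃ c : ℚ, c ≠ 0 ∧
        R.comp (Polynomial.C a * Polynomial.X + Polynomial.C b) = c • R) ↔
      ((a ≠ 1 ∧ ∃ c : ℚ, c ≠ 0 ∧
          R = c • (Polynomial.C (a - 1) * Polynomial.X + Polynomial.C b)) ∨
        (a = 1 ∧ b = 0))) := by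
  have ha0 : a ≠ 0 := ha.ne'
  have : Invertible a := invertibleOfNonzero ha0
  have hR0 : R ≠ 0 := hR.ne_zero
  constructor
  · have := hR.map (algEquivCMulXAddC a b)
    simpa [algEquivCMulXAddC_apply, ← comp_eq_aeval] using this
  constructor
  · rintro ⟨c, hc, h⟩
    by_cases ha1 : a = 1
    · subst ha1
      refine Or.inr ⟨rfl, ?_⟩
      rw [map_one, one_mul] at h
      -- c = 1
      have hdeg : (X + C b : Polynomial ℚ).natDegree ≠ 0 := by
        rw [natDegree_X_add_C]; exact one_ne_zero
      have hlc := congrArg leadingCoeff h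
      rw [leadingCoeff_comp hdeg, leadingCoeff_X_add_C, one_pow, mul_one,
        smul_eq_C_mul, leadingCoeff_mul, leadingCoeff_C] at hlc
      have hc1 : c = 1 := by
        have hlcR : R.leadingCoeff ≠ 0 := leadingCoeff_ne_zero.mpr hR0
        have h0 : (c - 1) * R.leadingCoeff = 0 := by linear_combination -hlc
        rcases mul_eq_zero.mp h0 with h' | h'
        · exact sub_eq_zero.mp h'
        · exact absurd h' hlcR
      rw [hc1, one_smul] at h
      by_contra hb
      have he : ∀ x : ℚ, R.eval (x + b) = R.eval x := by
        intro x
        have := congrArg (eval x) h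
        simpa [eval_comp] using this
      have hkey : ∀ k : ℕ, R.eval ((k : ℚ) * b) = R.eval 0 := by
        intro k
        induction k with
        | zero => simp
        | succ n ih => push_cast; rw [add_mul, one_mul, he]; exact ih
      have hP : R - C (R.eval 0) = 0 := by
        apply eq_zero_of_infinite_isRoot
        apply Set.infinite_of_injective_forall_mem
          (f := fun k : ℕ => (k : ℚ) * b)
        · intro i j hij
          exact_mod_cast mul_right_cancel₀ hb hij
        · intro k
          simp [IsRoot, hkey k]
      rw [sub_eq_zero] at hP
      rw [hP] at hR
      exact not_irreducible_C _ hR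
    · refine Or.inl ⟨ha1, ?_⟩
      have h1a : (1 : ℚ) - a ≠ 0 := sub_ne_zero.mpr (Ne.symm ha1)
      have ha1' : a - 1 ≠ 0 := sub_ne_zero.mpr ha1
      set t : ℚ := b / (1 - a) with ht
      have hfix : a * t + b = t := by
        have := div_mul_cancel₀ b h1a
        rw [← ht] at this
        linear_combination -this
      set S : Polynomial ℚ := R.comp (X + C t) with hS
      have hS0 : S ≠ 0 := fun h0 => hR0 (by
        have := congrArg (fun p => p.comp (X - C t)) h0
        simpa [hS, comp_assoc] using this)
      have hcomp : S.comp (C a * X) = c • S := by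
        have h2 := congrArg (fun p => p.comp (X + C t)) h
        simp only [smul_comp] at h2
        rw [comp_assoc] at h2
        rw [hS, comp_assoc]
        rw [← h2]
        congr 1
        simp only [add_comp, mul_comp, C_comp, X_comp]
        rw [mul_add, add_assoc, ← C_mul, ← C_add, hfix]
      have hco : ∀ i, S.coeff i * a ^ i = c * S.coeff i := by
        intro i
        have := congrArg (fun p => p.coeff i) hcomp
        simpa [aux_coeff_comp_C_mul_X, coeff_smul, smul_eq_mul] using this
      set n := S.natDegree with hn
      have hlcS : S.coeff n ≠ 0 := by
        rw [hn, ← leadingCoeff]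
        exact leadingCoeff_ne_zero.mpr hS0
      set l := S.coeff n with hl
      have hc_eq : c = a ^ n := by
        have h0 : (c - a ^ n) * l = 0 := by linear_combination -(hco n)
        rcases mul_eq_zero.mp h0 with h' | h'
        · exact sub_eq_zero.mp h'
        · exact absurd h' hlcS
      have hmono : ∀ i, i ≠ n → S.coeff i = 0 := by
        intro i hi
        by_contra h0
        have := hco i
        rw [hc_eq, mul_comm] at this
        have : a ^ i = a ^ n := mul_left_cancel₀ h0 (by linarith [this])
        exact hi (aux_pow_inj a ha ha1 this)
      have hSeq : S = C l * X ^ n := by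
        ext i
        rw [coeff_C_mul, coeff_X_pow]
        rcases eq_or_ne i n with rfl | hi
        · simp [hl]
        · simp [hi, hmono i hi]
      -- S is irreducible
      have hSirr : Irreducible S := by
        have := hR.map (algEquivAevalXAddC t)
        simpa [algEquivAevalXAddC_apply, ← comp_eq_aeval] using this
      -- n = 1
      have hn1 : n = 1 := by
        rcases Nat.lt_or_ge n 2 with h2 | h2
        · interval_cases n
          · rw [hSeq] at hSirr
            simp only [pow_zero, mul_one] at hSirr
            exact absurd hSirr (not_irreducible_C _)
          · rfl
        · exfalso
          have hfac : S = (C l * X ^ (n - 1)) * X := by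
            rw [hSeq, mul_assoc, ← pow_succ, Nat.sub_add_cancel (by omega)]
          rcases hSirr.isUnit_or_isUnit hfac with hu | hu
          · have := natDegree_eq_zero_of_isUnit hu
            rw [natDegree_C_mul_X_pow (n - 1) _ hlcS] at this
            omega
          · exact not_isUnit_X hu
      -- recover R
      have hReq : R = C l * (X - C t) := by
        have : S.comp (X - C t) = R := by
          rw [hS, comp_assoc]
          simp
        rw [← this, hSeq, mul_comp, C_comp, pow_comp, X_comp, hn1, pow_one]
      refine ⟨l / (a - 1), div_ne_zero hlcS ha1', ?_⟩
      rw [hReq]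
      have e1 : (l / (a - 1)) • (C (a - 1) * X + C b)
          = C (l / (a - 1) * (a - 1)) * X + C (l / (a - 1) * b) := by
        rw [smul_eq_C_mul, mul_add, ← mul_assoc, ← C_mul, ← C_mul]
      have e2 : l / (a - 1) * (a - 1) = l := div_mul_cancel₀ l ha1'
      have e3 : l / (a - 1) * b = -(l * t) := by
        rw [ht]
        field_simp
        ring
      rw [e1, e2, e3, map_neg, C_mul]
      ring
  · rintro (⟨ha1, c', hc', rfl⟩ | ⟨rfl, rfl⟩)
    · refine ⟨a, ha0, ?_⟩
      simp only [smul_comp, add_comp, mul_comp, sub_comp, one_comp, C_comp, X_comp,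
        smul_eq_C_mul, map_sub, map_one]
      ring
    · exact ⟨1, one_ne_zero, by simp⟩
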